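/- Every real symmetric matrix A admits a normal principal minor sequence, i.e., a nested sequence of principal minors D₁, …, Dₙ (with index sets I₁ ⊂ … ⊂ Iₙ, #I_i = i) such that D_r ≠ 0 where r = rank(A), and no two consecutive minors D_i, D_{i+1} with i ≤ r−1 are both zero. -/

import Mathlib

open Matrix

/-- The principal minor of `A` with rows and columns indexed by the finset `s`. -/
noncomputable def principalMinor {n : ℕ} (A : Matrix (Fin n) (Fin n) ℝ)
    (s : Finset (Fin n)) : ℝ :=
  Matrix.det (A.submatrix
    (fun k : Fin s.card => ((s.orderIsoOfFin rfl k : Fin n)))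
    (fun k : Fin s.card => ((s.orderIsoOfFin rfl k : Fin n))))

section Helpers

open Submodule Set Function


/-- Core lemma: a symmetric real matrix has a nonsingular principal submatrix of size its rank. -/
lemma key {m : ℕ} (M : Matrix (Fin m) (Fin m) ℝ) (hM : M.IsSymm) :
    ∃ K : Finset (Fin m), K.card = M.rank ∧
      (M.submatrix (K.orderEmbOfFin rfl) (K.orderEmbOfFin rfl)).det ≠ 0 := by
  have hsym : ∀ i j, M i j = M j i := fun i j => by
    conv_lhs => rw [← hM]
    rfl
  obtain ⟨b, hbsub, hbspan, hbind⟩ := exists_linearIndependent ℝ (Set.range Mᵀ)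
  haveI : Fintype b := ((Set.finite_range Mᵀ).subset hbsub).fintype
  have hch : ∀ v : b, ∃ j : Fin m, Mᵀ j = (v : Fin m → ℝ) := fun v => hbsub v.2
  choose φ hφ using hch
  have hφinj : Function.Injective φ := by
    intro v w h
    apply Subtype.ext
    rw [← hφ v, ← hφ w, h]
  set K : Finset (Fin m) := Finset.univ.image φ with hK
  have hKcard : K.card = Fintype.card b := by
    rw [hK, Finset.card_image_of_injective _ hφinj, Finset.card_univ]
  have hrank : K.card = M.rank := by
    rw [hKcard, M.rank_eq_finrank_span_cols, Matrix.col.eq_1, ← hbspan, finrank_span_set_eq_card hbind,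
      Set.toFinset_card]
  refine ⟨K, hrank, ?_⟩
  set e : Fin K.card → Fin m := fun k => K.orderEmbOfFin rfl k with he
  have heK : ∀ k, e k ∈ K := fun k => Finset.orderEmbOfFin_mem K rfl k
  have hψex : ∀ k, ∃ v : b, φ v = e k := by
    intro k
    have := heK k
    rw [hK, Finset.mem_image] at this
    obtain ⟨v, -, hv⟩ := this
    exact ⟨v, hv⟩
  choose ψ hψ using hψex
  have hψinj : Function.Injective ψ := by
    intro k₁ k₂ h
    have : e k₁ = e k₂ := by rw [← hψ k₁, ← hψ k₂, h]
    exact (K.orderEmbOfFin rfl).injective this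
  have hMe : ∀ k, Mᵀ (e k) = (ψ k : Fin m → ℝ) := by
    intro k; rw [← hψ k, hφ]
  -- the columns over K are linearly independent
  have hind : LinearIndependent ℝ (fun k => Mᵀ (e k)) := by
    have : (fun k => Mᵀ (e k)) = (fun v : b => (v : Fin m → ℝ)) ∘ ψ := by
      funext k; simp [hMe k]
    rw [this]
    exact hbind.comp ψ hψinj
  -- the columns over K span everything
  have hψbij : Function.Bijective ψ := by
    refine (Fintype.bijective_iff_injective_and_card ψ).2 ⟨hψinj, ?_⟩
    simp [hKcard]
  have hspan : ∀ j, Mᵀ j ∈ span ℝ (Set.range fun k => Mᵀ (e k)) := by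
    intro j
    have h1 : Mᵀ j ∈ span ℝ (Set.range Mᵀ) := subset_span ⟨j, rfl⟩
    rw [← hbspan] at h1
    have h2 : b ⊆ Set.range fun k => Mᵀ (e k) := by
      intro v hv
      obtain ⟨k, hk⟩ := hψbij.2 ⟨v, hv⟩
      exact ⟨k, by show Mᵀ (e k) = v; rw [hMe k, hk]⟩
    exact span_mono h2 h1
  -- now show the principal submatrix is a unit
  have hunit : IsUnit (M.submatrix e e) := by
    rw [← linearIndependent_cols_iff_isUnit]
    rw [Fintype.linearIndependent_iff]
    intro x hx k0
    -- y j := ∑ k, M j (e k) * x k vanishes for j in K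
    have hyK : ∀ k', ∑ k, M (e k') (e k) * x k = 0 := by
      intro k'
      have := congrFun hx k'
      simpa [Matrix.transpose_apply, Finset.sum_apply, mul_comm] using this
    have hyj : ∀ j, ∑ k, M j (e k) * x k = 0 := by
      intro j
      obtain ⟨c, hc⟩ := (mem_span_range_iff_exists_fun ℝ).1 (hspan j)
      have hMj : ∀ k, M j (e k) = ∑ k', c k' * M (e k') (e k) := by
        intro k
        have h1 := congrFun hc (e k)
        simp only [Finset.sum_apply, Pi.smul_apply, smul_eq_mul, Matrix.transpose_apply] at h1
        rw [hsym j (e k), ← h1]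
        exact Finset.sum_congr rfl fun k' _ => by rw [hsym (e k) (e k')]
      calc ∑ k, M j (e k) * x k
          = ∑ k, (∑ k', c k' * M (e k') (e k)) * x k := by simp_rw [hMj]
        _ = ∑ k', c k' * ∑ k, M (e k') (e k) * x k := by
            simp_rw [Finset.sum_mul, Finset.mul_sum, mul_assoc]
            exact Finset.sum_comm
        _ = 0 := by simp [hyK]
    -- conclude x = 0 by linear independence
    have : ∑ k, x k • Mᵀ (e k) = 0 := by
      funext j
      simp only [Finset.sum_apply, Pi.smul_apply, smul_eq_mul, Matrix.transpose_apply,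
        Pi.zero_apply]
      simpa [mul_comm] using hyj j
    exact Fintype.linearIndependent_iff.1 hind x this k0
  rw [Matrix.isUnit_iff_isUnit_det, isUnit_iff_ne_zero] at hunit
  exact hunit


lemma col_del {α : Type*} [Fintype α] {c c' : ℕ} (B : Matrix α (Fin c) ℝ)
    (f : Fin c' → Fin c) (hf : Function.Injective f) (hc : c ≤ c' + 1) :
    B.rank ≤ (B.submatrix id f).rank + 1 := by
  have hcols : ∀ (g : Fin c' → Fin c), range ((B.submatrix id g)ᵀ) = range (Bᵀ ∘ g) := by
    intro g; rfl
  by_cases hsurj : Function.Surjective f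
  · have hsub : range Bᵀ ⊆ range (Bᵀ ∘ f) := by
      rintro - ⟨j, rfl⟩
      obtain ⟨i, rfl⟩ := hsurj j
      exact ⟨i, rfl⟩
    have := Submodule.finrank_mono (span_mono (R := ℝ) hsub)
    rw [B.rank_eq_finrank_span_cols, (B.submatrix id f).rank_eq_finrank_span_cols,
      Matrix.col.eq_1, Matrix.col.eq_1, hcols]
    omega
  · skip
    obtain ⟨j0, hj0⟩ : ∃ j0, ∀ i, f i ≠ j0 := by
      simp only [Surjective, not_forall] at hsurj
      obtain ⟨j0, hj0⟩ := hsurj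
      exact ⟨j0, fun i hi => hj0 ⟨i, hi⟩⟩
    have hcc : c = c' + 1 := by
      have h1 : c' ≤ c := by
        simpa using Fintype.card_le_of_injective f hf
      rcases Nat.lt_or_ge c' c with h | h
      · omega
      · exfalso
        have hbij : Function.Bijective f :=
          (Fintype.bijective_iff_injective_and_card f).2 ⟨hf, by simp; omega⟩
        obtain ⟨i, hi⟩ := hbij.2 j0
        exact hj0 i hi
    have hcover : ∀ j : Fin c, j = j0 ∨ ∃ i, f i = j := by
      have huniv : insert j0 (Finset.univ.image f) = Finset.univ := by
        apply Finset.eq_univ_of_card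
        rw [Finset.card_insert_of_notMem (by simp [hj0]),
          Finset.card_image_of_injective _ hf]
        simp [hcc]
      intro j
      have : j ∈ insert j0 (Finset.univ.image f) := by rw [huniv]; exact Finset.mem_univ j
      rcases Finset.mem_insert.1 this with h | h
      · exact Or.inl h
      · obtain ⟨i, -, hi⟩ := Finset.mem_image.1 h
        exact Or.inr ⟨i, hi⟩
    have hsub : range Bᵀ ⊆ (range (Bᵀ ∘ f)) ∪ {Bᵀ j0} := by
      rintro - ⟨j, rfl⟩
      rcases hcover j with rfl | ⟨i, rfl⟩
      · exact Or.inr rfl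
      · exact Or.inl ⟨i, rfl⟩
    have h1 : span ℝ (range Bᵀ) ≤ span ℝ (range (Bᵀ ∘ f)) ⊔ span ℝ {Bᵀ j0} := by
      rw [← span_union]
      exact span_mono hsub
    have h2 := Submodule.finrank_mono h1
    have h3 := Submodule.finrank_add_le_finrank_add_finrank
      (span ℝ (range (Bᵀ ∘ f))) (span ℝ {Bᵀ j0})
    have h4 : Module.finrank ℝ (span ℝ ({Bᵀ j0} : Set (α → ℝ))) ≤ 1 := by
      simpa using finrank_span_le_card ({Bᵀ j0} : Set (α → ℝ))
    rw [B.rank_eq_finrank_span_cols, (B.submatrix id f).rank_eq_finrank_span_cols,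
      Matrix.col.eq_1, Matrix.col.eq_1, hcols]
    omega

lemma row_del {α : Type*} [Fintype α] {c c' : ℕ} (B : Matrix (Fin c) α ℝ)
    (f : Fin c' → Fin c) (hf : Function.Injective f) (hc : c ≤ c' + 1) :
    B.rank ≤ (B.submatrix f id).rank + 1 := by
  have h := col_del Bᵀ f hf hc
  rw [Matrix.rank_transpose] at h
  have he : (Bᵀ.submatrix id f) = (B.submatrix f id)ᵀ := rfl
  rw [he, Matrix.rank_transpose] at h
  exact h

lemma principal_del {c c' : ℕ} (B : Matrix (Fin c) (Fin c) ℝ)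
    (f : Fin c' → Fin c) (hf : Function.Injective f) (hc : c ≤ c' + 1) :
    B.rank ≤ (B.submatrix f f).rank + 2 := by
  have h1 := col_del B f hf hc
  have h2 := row_del (B.submatrix id f) f hf hc
  rw [Matrix.submatrix_submatrix] at h2
  simp only [Function.comp_id, Function.id_comp] at h2
  omega
noncomputable def subMat {n : ℕ} (A : Matrix (Fin n) (Fin n) ℝ) (s : Finset (Fin n)) :
    Matrix (Fin s.card) (Fin s.card) ℝ :=
  A.submatrix (fun k => s.orderEmbOfFin rfl k) (fun k => s.orderEmbOfFin rfl k)

lemma pm_eq {n : ℕ} (A : Matrix (Fin n) (Fin n) ℝ) (s : Finset (Fin n)) :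
    principalMinor A s = (subMat A s).det := rfl

lemma subMat_isSymm {n : ℕ} {A : Matrix (Fin n) (Fin n) ℝ} (hA : A.IsSymm)
    (s : Finset (Fin n)) : (subMat A s).IsSymm := by
  ext i j
  exact hA.apply _ _

lemma rank_subMat_of_det_ne {n : ℕ} {A : Matrix (Fin n) (Fin n) ℝ} {s : Finset (Fin n)}
    (h : principalMinor A s ≠ 0) : (subMat A s).rank = s.card := by
  rw [pm_eq] at h
  rw [Matrix.rank_of_isUnit _ ((Matrix.isUnit_iff_isUnit_det _).2 (isUnit_iff_ne_zero.2 h))]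
  simp


lemma key' {n : ℕ} (A : Matrix (Fin n) (Fin n) ℝ) (hA : A.IsSymm) (s : Finset (Fin n)) :
    ∃ t : Finset (Fin n), t ⊆ s ∧ t.card = (subMat A s).rank ∧ principalMinor A t ≠ 0 := by
  obtain ⟨K, hKc, hKdet⟩ := key (subMat A s) (subMat_isSymm hA s)
  set t : Finset (Fin n) := K.image (fun k => s.orderEmbOfFin rfl k) with ht
  have htsub : t ⊆ s := by
    intro x hx
    rw [ht, Finset.mem_image] at hx
    obtain ⟨k, -, rfl⟩ := hx
    exact Finset.orderEmbOfFin_mem s rfl k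
  have htc : t.card = K.card :=
    Finset.card_image_of_injective _ (s.orderEmbOfFin rfl).injective
  set f : Fin t.card → Fin n :=
    fun i => s.orderEmbOfFin rfl (K.orderEmbOfFin rfl (Fin.cast htc i)) with hf
  have hmono : StrictMono f := by
    intro i j hij
    exact (s.orderEmbOfFin rfl).strictMono ((K.orderEmbOfFin rfl).strictMono
      (by simp only [Fin.lt_def, Fin.coe_cast]; exact hij))
  have hmem : ∀ i, f i ∈ t := by
    intro i
    rw [ht, Finset.mem_image]
    exact ⟨K.orderEmbOfFin rfl (Fin.cast htc i), Finset.orderEmbOfFin_mem _ _ _, rfl⟩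
  have huniq : f = fun i => t.orderEmbOfFin rfl i :=
    Finset.orderEmbOfFin_unique rfl hmem hmono
  refine ⟨t, htsub, htc.trans hKc, ?_⟩
  have heq : A.submatrix f f =
      ((subMat A s).submatrix (K.orderEmbOfFin rfl) (K.orderEmbOfFin rfl)).submatrix
        ⇑(finCongr htc) ⇑(finCongr htc) := rfl
  have hdet : principalMinor A t = (A.submatrix f f).det := by
    rw [pm_eq]
    unfold subMat
    rw [huniq]
  rw [hdet, heq, Matrix.det_submatrix_equiv_self (finCongr htc)]
  exact hKdet

lemma subMat_subset {n : ℕ} (A : Matrix (Fin n) (Fin n) ℝ) {t s : Finset (Fin n)}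
    (hts : t ⊆ s) : ∃ g : Fin t.card → Fin s.card, Function.Injective g ∧
      subMat A t = (subMat A s).submatrix g g := by
  refine ⟨fun i => (s.orderIsoOfFin rfl).symm
    ⟨t.orderEmbOfFin rfl i, hts (Finset.orderEmbOfFin_mem t rfl i)⟩, ?_, ?_⟩
  · intro i j hij
    have := congrArg (s.orderIsoOfFin rfl) hij
    simp only [OrderIso.apply_symm_apply, Subtype.mk.injEq] at this
    exact (t.orderEmbOfFin rfl).injective this
  · have hg : ∀ i, s.orderEmbOfFin rfl ((s.orderIsoOfFin rfl).symm
        ⟨t.orderEmbOfFin rfl i, hts (Finset.orderEmbOfFin_mem t rfl i)⟩) =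
        t.orderEmbOfFin rfl i := by
      intro i
      rw [← Finset.coe_orderIsoOfFin_apply, OrderIso.apply_symm_apply]
    ext i j
    simp only [subMat, Matrix.submatrix_apply, hg]
lemma down {n : ℕ} (A : Matrix (Fin n) (Fin n) ℝ) (hA : A.IsSymm) (s : Finset (Fin n))
    (h1 : 1 ≤ s.card) (hinv : s.card - 1 ≤ (subMat A s).rank) :
    ∃ t : Finset (Fin n), t ⊂ s ∧ t.card + 1 = s.card ∧ t.card - 1 ≤ (subMat A t).rank ∧
      (principalMinor A s ≠ 0 ∨ principalMinor A t ≠ 0) := by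
  obtain ⟨t0, ht0s, ht0c, ht0pm⟩ := key' A hA s
  have hble : (subMat A s).rank ≤ s.card := by
    simpa using (subMat A s).rank_le_card_width
  by_cases hr : (subMat A s).rank = s.card
  · have ht0 : t0 = s := Finset.eq_of_subset_of_card_le ht0s (by omega)
    have hpms : principalMinor A s ≠ 0 := ht0 ▸ ht0pm
    have hne : s.Nonempty := Finset.card_pos.1 h1
    set t := s.erase (s.max' hne) with htdef
    have htss : t ⊂ s := Finset.erase_ssubset (s.max'_mem hne)
    have htc : t.card + 1 = s.card := by
      rw [htdef, Finset.card_erase_of_mem (s.max'_mem hne)]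
      omega
    obtain ⟨g, hginj, hgeq⟩ := subMat_subset A htss.subset
    have hdel := principal_del (subMat A s) g hginj (by omega)
    rw [← hgeq] at hdel
    refine ⟨t, htss, htc, ?_, Or.inl hpms⟩
    have h2 : (subMat A s).rank = s.card := hr
    omega
  · have hr' : (subMat A s).rank = s.card - 1 := by omega
    have ht0card : t0.card = s.card - 1 := by omega
    refine ⟨t0, ht0s.ssubset_of_ne ?_, by omega, ?_, Or.inr ht0pm⟩
    · intro h
      rw [h] at ht0card
      omega
    · have := rank_subMat_of_det_ne ht0pm
      omega

lemma chain_down {n : ℕ} (A : Matrix (Fin n) (Fin n) ℝ) (hA : A.IsSymm) :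
    ∀ c : ℕ, ∀ s : Finset (Fin n), s.card = c → s.card - 1 ≤ (subMat A s).rank →
    ∃ f : ℕ → Finset (Fin n), f c = s ∧ (∀ i, i ≤ c → (f i).card = i) ∧
      (∀ i, i < c → f i ⊂ f (i + 1)) ∧
      (∀ i, 1 ≤ i → i + 1 ≤ c →
        (principalMinor A (f i) ≠ 0 ∨ principalMinor A (f (i + 1)) ≠ 0)) := by
  intro c
  induction c with
  | zero =>
    intro s hs _
    refine ⟨fun _ => s, rfl, fun i hi => ?_, fun i hi => absurd hi (by omega),
      fun i hi1 hi2 => absurd hi2 (by omega)⟩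
    show s.card = i
    omega
  | succ c ih =>
    intro s hs hinv
    obtain ⟨t, hts, htc, htinv, hpm⟩ := down A hA s (by omega) hinv
    obtain ⟨f', hf'c, hf'card, hf'sub, hf'pm⟩ := ih t (by omega) htinv
    refine ⟨fun i => if i ≤ c then f' i else s, by simp, ?_, ?_, ?_⟩
    · intro i hi
      by_cases h : i ≤ c
      · simpa [h] using hf'card i h
      · have : i = c + 1 := by omega
        simp [h, this, hs]
    · intro i hi
      by_cases h : i < c
      · simpa [Nat.le_of_lt h, Nat.succ_le_of_lt h] using hf'sub i h
      · have hic : i = c := by omega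
        rw [hic]
        show (if c ≤ c then f' c else s) ⊂ (if c + 1 ≤ c then f' (c + 1) else s)
        rw [if_pos (le_refl c), if_neg (by omega), hf'c]
        exact hts
    · intro i hi1 hi2
      by_cases h : i + 1 ≤ c
      · simpa [h, Nat.le_of_succ_le h] using hf'pm i hi1 h
      · have hic : i = c := by omega
        rw [hic]
        show principalMinor A (if c ≤ c then f' c else s) ≠ 0 ∨
          principalMinor A (if c + 1 ≤ c then f' (c + 1) else s) ≠ 0
        rw [if_pos (le_refl c), if_neg (show ¬ c + 1 ≤ c by omega), hf'c]
        exact Or.symm hpm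

lemma chain_up {n : ℕ} : ∀ d : ℕ, ∀ s : Finset (Fin n), s.card + d = n →
    ∃ g : ℕ → Finset (Fin n), g s.card = s ∧ (∀ i, s.card ≤ i → i ≤ n → (g i).card = i) ∧
      (∀ i, s.card ≤ i → i < n → g i ⊂ g (i + 1)) := by
  intro d
  induction d with
  | zero =>
    intro s hs
    refine ⟨fun _ => s, rfl, fun i hi1 hi2 => ?_, fun i hi1 hi2 => absurd hi2 (by omega)⟩
    show s.card = i
    omega
  | succ d ih =>
    intro s hs
    have hlt : s.card < n := by omega
    obtain ⟨x, hx⟩ : ∃ x, x ∉ s := by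
      by_contra h
      push_neg at h
      have : s = Finset.univ := Finset.eq_univ_iff_forall.2 h
      rw [this, Finset.card_univ, Fintype.card_fin] at hlt
      omega
    set t := insert x s with htdef
    have htc : t.card = s.card + 1 := Finset.card_insert_of_notMem hx
    obtain ⟨g', hg'c, hg'card, hg'sub⟩ := ih t (by omega)
    refine ⟨fun i => if i ≤ s.card then s else g' i, by simp, ?_, ?_⟩
    · intro i hi1 hi2
      show (if i ≤ s.card then s else g' i).card = i
      by_cases h : i ≤ s.card
      · have : i = s.card := by omega
        simp [h, this]
      · rw [if_neg h]
        exact hg'card i (by omega) hi2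
    · intro i hi1 hi2
      show (if i ≤ s.card then s else g' i) ⊂ (if i + 1 ≤ s.card then s else g' (i + 1))
      by_cases h : i ≤ s.card
      · have hieq : i = s.card := by omega
        subst hieq
        rw [if_pos (le_refl _), if_neg (by omega)]
        have hgt : g' (s.card + 1) = t := by rw [← htc]; exact hg'c
        rw [hgt]
        exact Finset.ssubset_insert hx
      · rw [if_neg h, if_neg (by omega)]
        exact hg'sub i (by omega) hi2

end Helpers

/-- Every real symmetric matrix admits a normal principal minor sequence. -/

theorem stmt7 {n : ℕ} (A : Matrix (Fin n) (Fin n) ℝ) (hA : A.IsSymm) :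
    ∃ I : ℕ → Finset (Fin n),
      (∀ i, i ≤ n → (I i).card = i) ∧
      (∀ i, i < n → I i ⊂ I (i + 1)) ∧
      I n = Finset.univ ∧
      principalMinor A (I A.rank) ≠ 0 ∧
      (∀ i, 1 ≤ i → i + 1 ≤ A.rank →
        ¬(principalMinor A (I i) = 0 ∧ principalMinor A (I (i + 1)) = 0)) := by
  obtain ⟨K, hKc, hKdet⟩ := key A hA
  have hpmK : principalMinor A K ≠ 0 := hKdet
  have hrn : A.rank ≤ n := by simpa using A.rank_le_card_width
  have hKn : K.card ≤ n := by omega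
  have hKrank : (subMat A K).rank = K.card := rank_subMat_of_det_ne hpmK
  obtain ⟨f, hfc, hfcard, hfsub, hfpm⟩ := chain_down A hA K.card K rfl (by omega)
  obtain ⟨g, hgc, hgcard, hgsub⟩ := chain_up (n - K.card) K (by omega)
  refine ⟨fun i => if i < K.card then f i else g i, ?_, ?_, ?_, ?_, ?_⟩
  · intro i hi
    show (if i < K.card then f i else g i).card = i
    by_cases h : i < K.card
    · rw [if_pos h]; exact hfcard i (le_of_lt h)
    · rw [if_neg h]; exact hgcard i (by omega) hi
  · intro i hi
    show (if i < K.card then f i else g i) ⊂ (if i + 1 < K.card then f (i + 1) else g (i + 1))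
    by_cases h : i < K.card
    · rw [if_pos h]
      by_cases h2 : i + 1 < K.card
      · rw [if_pos h2]; exact hfsub i h
      · have hieq : i + 1 = K.card := by omega
        rw [if_neg h2, hieq, hgc, ← hfc, ← hieq]
        exact hfsub i h
    · rw [if_neg h, if_neg (by omega)]
      exact hgsub i (by omega) hi
  · show (if n < K.card then f n else g n) = Finset.univ
    rw [if_neg (by omega)]
    have := hgcard n (by omega) (le_refl n)
    exact Finset.eq_univ_of_card _ (by simp [this])
  · show principalMinor A (if A.rank < K.card then f A.rank else g A.rank) ≠ 0
    rw [if_neg (by omega), ← hKc, hgc]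
    exact hpmK
  · intro i hi1 hi2
    rw [not_and_or]
    have hiK : i < K.card := by omega
    have hdisj : principalMinor A (f i) ≠ 0 ∨ principalMinor A (f (i + 1)) ≠ 0 :=
      hfpm i hi1 (by omega)
    show ¬ principalMinor A (if i < K.card then f i else g i) = 0 ∨
      ¬ principalMinor A (if i + 1 < K.card then f (i + 1) else g (i + 1)) = 0
    rw [if_pos hiK]
    by_cases h2 : i + 1 < K.card
    · rw [if_pos h2]; exact hdisj
    · have hieq : i + 1 = K.card := by omega
      rw [if_neg h2, hieq, hgc, ← hfc, ← hieq]
      exact hdisj
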